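/- For all η > 0 and v > 0: 3η / (2·log(1 + √(η/v))) ≤ (3/4)·η + (3/2)·√(v·η). -/

import Mathlib

open Real

lemma stmt_18_aux (s : ℝ) (hs : 0 ≤ s) : 2 * s / (2 + s) ≤ Real.log (1 + s) := by
  set f : ℝ → ℝ := fun t => Real.log (1 + t) - 2 * t / (2 + t) with hf
  have hder : ∀ x : ℝ, 0 ≤ x → HasDerivAt f (1 / (1 + x) - 4 / (2 + x) ^ 2) x := by
    intro x hx
    have h1 : HasDerivAt (fun t : ℝ => Real.log (1 + t)) (1 / (1 + x)) x := by
      have ha : HasDerivAt (fun t : ℝ => 1 + t) 1 x := (hasDerivAt_id x).const_add 1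
      have h := (Real.hasDerivAt_log (by linarith : (1:ℝ) + x ≠ 0)).comp x ha
      rw [mul_one, ← one_div] at h
      exact h
    have h2 : HasDerivAt (fun t : ℝ => 2 * t / (2 + t)) (4 / (2 + x) ^ 2) x := by
      have hn : HasDerivAt (fun t : ℝ => 2 * t) 2 x := by
        simpa using (hasDerivAt_id x).const_mul 2
      have hd : HasDerivAt (fun t : ℝ => 2 + t) 1 x := (hasDerivAt_id x).const_add 2
      have hne : (2 + x) ≠ 0 := by linarith
      have := hn.div hd hne
      rw [show (4:ℝ) / (2 + x) ^ 2 = (2 * (2 + x) - 2 * x * 1) / (2 + x) ^ 2 by ring]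
      exact this
    exact h1.sub h2
  have hmono : MonotoneOn f (Set.Ici 0) := by
    apply monotoneOn_of_deriv_nonneg (convex_Ici 0)
    · intro x hx
      exact ((hder x hx).continuousAt).continuousWithinAt
    · intro x hx
      rw [interior_Ici] at hx
      replace hx := Set.mem_Ioi.mp hx
      exact (hder x (le_of_lt hx)).differentiableAt.differentiableWithinAt
    · intro x hx
      rw [interior_Ici] at hx
      replace hx := Set.mem_Ioi.mp hx
      rw [(hder x (le_of_lt hx)).deriv]
      have h1 : (0:ℝ) < 1 + x := by linarith
      have h2 : (0:ℝ) < (2 + x) ^ 2 := by positivity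
      rw [sub_nonneg, div_le_div_iff₀ h2 h1]
      nlinarith
  have h0 : f 0 = 0 := by simp [hf]
  have := hmono (Set.mem_Ici.mpr le_rfl) (Set.mem_Ici.mpr hs) hs
  rw [h0] at this
  simp only [hf] at this
  linarith

theorem stmt_18 (η v : ℝ) (hη : 0 < η) (hv : 0 < v) :
    3 * η / (2 * Real.log (1 + Real.sqrt (η / v))) ≤
      (3 / 4) * η + (3 / 2) * Real.sqrt (v * η) := by
  set s := Real.sqrt (η / v) with hsdef
  have hs : 0 < s := Real.sqrt_pos.mpr (by positivity)
  have hlog : 2 * s / (2 + s) ≤ Real.log (1 + s) := stmt_18_aux s hs.le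
  have hlogpos : 0 < Real.log (1 + s) := lt_of_lt_of_le (by positivity) hlog
  have hsq : s ^ 2 = η / v := Real.sq_sqrt (by positivity)
  have hsv : s * Real.sqrt (v * η) = η := by
    have : (s * Real.sqrt (v * η)) ^ 2 = η ^ 2 := by
      rw [mul_pow, hsq, Real.sq_sqrt (by positivity)]
      field_simp
    have h1 : 0 ≤ s * Real.sqrt (v * η) := by positivity
    nlinarith [this, h1, Real.sqrt_nonneg (v * η)]
  have step1 : 3 * η / (2 * Real.log (1 + s)) ≤ 3 * η / (2 * (2 * s / (2 + s))) := by
    apply div_le_div_of_nonneg_left (by positivity) (by positivity)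
    linarith
  have step2 : 3 * η / (2 * (2 * s / (2 + s))) = (3 / 4) * η + (3 / 2) * (η / s) := by
    field_simp
    ring
  have step3 : η / s = Real.sqrt (v * η) := by
    field_simp [hs.ne'] at hsv ⊢
    linarith [hsv]
  calc 3 * η / (2 * Real.log (1 + s)) ≤ 3 * η / (2 * (2 * s / (2 + s))) := step1
    _ = (3 / 4) * η + (3 / 2) * (η / s) := step2
    _ = (3 / 4) * η + (3 / 2) * Real.sqrt (v * η) := by rw [step3]
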